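/- Let λ₁ ≥ 0, λ₂ > 0 and define v*(x) = min(max(0, 1 − (x−λ₁)/λ₂), 1) for x ≥ 0. Then ρ(ℓ) = ∫₀^ℓ v*(x) dx equals: ℓ if ℓ ≤ λ₁; θℓ − ℓ²/(2λ₂) − (θ−1)²λ₂/2 if λ₁ < ℓ < λ₁+λ₂, where θ = (λ₁+λ₂)/λ₂; and (λ₂ + 2λ₁)/2 if ℓ ≥ λ₁+λ₂. -/

import Mathlib

/-- Piecewise closed form of ρ(ℓ) = ∫₀^ℓ v*(x) dx for the predefined curriculum. -/
theorem stmt3 (l1 l2 : ℝ) (h1 : 0 ≤ l1) (h2 : 0 < l2) (ℓ : ℝ) (hℓ : 0 ≤ ℓ) :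
    (ℓ ≤ l1 → ∫ x in (0:ℝ)..ℓ, min (max 0 (1 - (x - l1) / l2)) 1 = ℓ) ∧
    (l1 < ℓ → ℓ < l1 + l2 →
      ∫ x in (0:ℝ)..ℓ, min (max 0 (1 - (x - l1) / l2)) 1 =
        ((l1 + l2) / l2) * ℓ - ℓ ^ 2 / (2 * l2) - ((l1 + l2) / l2 - 1) ^ 2 * l2 / 2) ∧
    (l1 + l2 ≤ ℓ →
      ∫ x in (0:ℝ)..ℓ, min (max 0 (1 - (x - l1) / l2)) 1 = (l2 + 2 * l1) / 2) := by
  have hcont : Continuous fun x : ℝ => min (max 0 (1 - (x - l1) / l2)) 1 := by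
    fun_prop
  have hint : ∀ a b : ℝ, IntervalIntegrable
      (fun x : ℝ => min (max 0 (1 - (x - l1) / l2)) 1) MeasureTheory.volume a b :=
    fun a b => hcont.intervalIntegrable a b
  have seg1 : ∀ a b : ℝ, a ≤ b → b ≤ l1 →
      (∫ x in a..b, min (max 0 (1 - (x - l1) / l2)) 1) = b - a := by
    intro a b hab hbl
    rw [intervalIntegral.integral_congr (g := fun _ => (1:ℝ))]
    · simp
    · intro x hx
      rw [Set.uIcc_of_le hab] at hx
      have hx1 : x ≤ l1 := le_trans hx.2 hbl
      have hd : (x - l1) / l2 ≤ 0 := div_nonpos_of_nonpos_of_nonneg (by linarith) h2.le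
      have h1' : (1:ℝ) ≤ 1 - (x - l1) / l2 := by linarith
      simp only
      rw [max_eq_right (by linarith), min_eq_right h1']
  have seg2 : ∀ a b : ℝ, l1 ≤ a → a ≤ b → b ≤ l1 + l2 →
      (∫ x in a..b, min (max 0 (1 - (x - l1) / l2)) 1) =
        (b - (b - l1)^2 / (2 * l2)) - (a - (a - l1)^2 / (2 * l2)) := by
    intro a b hla hab hbl
    rw [intervalIntegral.integral_congr (g := fun x => 1 - (x - l1) / l2)]
    · have hderiv : ∀ x ∈ Set.uIcc a b, HasDerivAt
          (fun x : ℝ => x - (x - l1)^2 / (2 * l2)) (1 - (x - l1) / l2) x := by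
        intro x _
        have h := (((hasDerivAt_id x).sub_const l1).pow 2).div_const (2 * l2)
        have h2' := (hasDerivAt_id x).sub h
        refine h2'.congr_deriv ?_
        simp only [id]
        field_simp
        ring
      rw [intervalIntegral.integral_eq_sub_of_hasDerivAt hderiv]
      · exact (by fun_prop : Continuous fun x : ℝ => 1 - (x - l1) / l2).intervalIntegrable a b
    · intro x hx
      rw [Set.uIcc_of_le hab] at hx
      have hx1 : l1 ≤ x := le_trans hla hx.1
      have hx2 : x ≤ l1 + l2 := le_trans hx.2 hbl
      have hd0 : 0 ≤ (x - l1) / l2 := div_nonneg (by linarith) h2.le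
      have hd1 : (x - l1) / l2 ≤ 1 := by
        rw [div_le_one h2]; linarith
      simp only
      rw [max_eq_right (by linarith), min_eq_left (by linarith)]
  have seg3 : ∀ a b : ℝ, l1 + l2 ≤ a → a ≤ b →
      (∫ x in a..b, min (max 0 (1 - (x - l1) / l2)) 1) = 0 := by
    intro a b hla hab
    rw [intervalIntegral.integral_congr (g := fun _ => (0:ℝ))]
    · simp
    · intro x hx
      rw [Set.uIcc_of_le hab] at hx
      have hx1 : l1 + l2 ≤ x := le_trans hla hx.1
      have hd1 : 1 ≤ (x - l1) / l2 := by
        rw [le_div_iff₀ h2]; linarith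
      simp only
      rw [max_eq_left (by linarith), min_eq_left (by linarith)]
  refine ⟨fun h => ?_, fun ha hb => ?_, fun h => ?_⟩
  · rw [seg1 0 ℓ hℓ h]; ring
  · rw [← intervalIntegral.integral_add_adjacent_intervals (hint 0 l1) (hint l1 ℓ),
      seg1 0 l1 h1 le_rfl, seg2 l1 ℓ le_rfl ha.le hb.le]
    field_simp
    ring
  · rw [← intervalIntegral.integral_add_adjacent_intervals (hint 0 (l1 + l2)) (hint (l1 + l2) ℓ),
      ← intervalIntegral.integral_add_adjacent_intervals (hint 0 l1) (hint l1 (l1 + l2)),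
      seg1 0 l1 h1 le_rfl, seg2 l1 (l1 + l2) le_rfl (by linarith) le_rfl,
      seg3 (l1 + l2) ℓ le_rfl h]
    field_simp
    ring
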